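/- Let (Ω, F, P) be a probability space satisfying the hypotheses below. Then for every ε > 0 there exists R such that for all x ∈ ℤ^d with |x| ≥ R, limsup_{n → ∞} P( t(nx) ≤ t((n+1)x) ) > 1 − ε. (This is equation (5) of the paper, the limsup consequence of Theorem 1.1, stated with all properties of the contact process hitting times that the proof uses carried as explicit hypotheses.) -/

import Mathlib

open MeasureTheory Filter Finset

/-- Equation (5) of the paper: for every `ε > 0` there is `R` such that for
all `x` with `|x| ≥ R`, `limsup_{n→∞} P(t(nx) ≤ t((n+1)x)) > 1 - ε`. -/
def onorm {d : ℕ} (x : Fin d → ℤ) : ℕ := ∑ i, (x i).natAbs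

/-- Abstract limsup bound from the recurrence `a (n+1) ≤ a n + p n * E + C`. -/
lemma stmt_10_lemB (a p : ℕ → ℝ) (E C m : ℝ) (hE : 0 ≤ E) (hC : 0 ≤ C)
    (hp0 : ∀ n, 0 ≤ p n) (hp1 : ∀ n, p n ≤ 1)
    (hrec : ∀ n, a (n + 1) ≤ a n + p n * E + C)
    (hlim : Tendsto (fun n : ℕ => a n / n) atTop (nhds m)) :
    m ≤ (limsup p atTop) * E + C := by
  set s := limsup p atTop with hs
  have hb : IsBoundedUnder (· ≤ ·) atTop p := isBoundedUnder_of ⟨1, hp1⟩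
  have hs0 : 0 ≤ s := le_limsup_of_frequently_le (Frequently.of_forall hp0) hb
  have key : ∀ δ : ℝ, 0 < δ → m ≤ (s + δ) * E + C := by
    intro δ hδ
    obtain ⟨N₀, hN₀⟩ : ∃ N₀, ∀ n ≥ N₀, p n < s + δ := by
      have := eventually_lt_of_limsup_lt (show limsup p atTop < s + δ by linarith) hb
      exact this.exists_forall_of_atTop
    set K := (s + δ) * E + C with hK
    have hK0 : 0 ≤ K := by positivity
    have claim : ∀ k : ℕ, a (k + N₀) ≤ a N₀ + k * K := by
      intro k
      induction k with
      | zero => simp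
      | succ k ih =>
        have h1 := hrec (k + N₀)
        have h2 : p (k + N₀) * E ≤ (s + δ) * E :=
          mul_le_mul_of_nonneg_right (le_of_lt (hN₀ _ (Nat.le_add_left _ _))) hE
        have : a (k + 1 + N₀) = a ((k + N₀) + 1) := by ring_nf
        rw [this]
        push_cast
        calc a ((k + N₀) + 1) ≤ a (k + N₀) + p (k + N₀) * E + C := h1
          _ ≤ (a N₀ + k * K) + (s + δ) * E + C := by linarith
          _ = a N₀ + (k + 1) * K := by rw [hK]; ring
    have hf : Tendsto (fun k : ℕ => a (k + N₀) / ((k + N₀ : ℕ) : ℝ)) atTop (nhds m) :=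
      hlim.comp (tendsto_add_atTop_nat N₀)
    have hgnat : Tendsto (fun k : ℕ => ((k + N₀ : ℕ) : ℝ)) atTop atTop :=
      tendsto_natCast_atTop_atTop.comp (tendsto_add_atTop_nat N₀)
    have hg : Tendsto (fun k : ℕ => a N₀ / ((k + N₀ : ℕ) : ℝ) + K) atTop (nhds (0 + K)) :=
      (Tendsto.div_atTop tendsto_const_nhds hgnat).add tendsto_const_nhds
    rw [zero_add] at hg
    refine le_of_tendsto_of_tendsto hf hg ?_
    filter_upwards [eventually_ge_atTop 1] with k hk
    have hn : (0 : ℝ) < ((k + N₀ : ℕ) : ℝ) := by positivity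
    have h1 : a (k + N₀) / ((k + N₀ : ℕ) : ℝ) ≤ (a N₀ + k * K) / ((k + N₀ : ℕ) : ℝ) := by
      gcongr
      exact claim k
    have h2 : (k : ℝ) * K / ((k + N₀ : ℕ) : ℝ) ≤ K := by
      rw [div_le_iff₀ hn]
      have : (k : ℝ) ≤ ((k + N₀ : ℕ) : ℝ) := by push_cast; linarith [Nat.cast_nonneg (α := ℝ) N₀]
      nlinarith
    calc a (k + N₀) / ((k + N₀ : ℕ) : ℝ) ≤ (a N₀ + k * K) / ((k + N₀ : ℕ) : ℝ) := h1
      _ = a N₀ / ((k + N₀ : ℕ) : ℝ) + (k : ℝ) * K / ((k + N₀ : ℕ) : ℝ) := by ring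
      _ ≤ a N₀ / ((k + N₀ : ℕ) : ℝ) + K := by linarith
  by_contra hcon
  push_neg at hcon
  have hδ : 0 < (m - (s * E + C)) / (E + 1) := by
    apply div_pos; linarith; linarith
  have := key _ hδ
  have hEE : (m - (s * E + C)) / (E + 1) * E < (m - (s * E + C)) / (E + 1) * (E + 1) := by
    apply mul_lt_mul_of_pos_left _ hδ; linarith
  rw [div_mul_cancel₀] at hEE
  · nlinarith
  · linarith

/-- The key recurrence inequality coming from the renewal bound. -/
lemma stmt_10_lemA {Ω : Type*} [MeasurableSpace Ω] (P : Measure Ω) [IsProbabilityMeasure P]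
    {d : ℕ} (t σ : (Fin d → ℤ) → Ω → ℝ)
    (ht_meas : ∀ x, Measurable (t x)) (hσ_meas : ∀ x, Measurable (σ x))
    (ht_nonneg : ∀ x ω, 0 ≤ t x ω)
    (ht_int : ∀ x, Integrable (t x) P) (hσ_int : ∀ x, Integrable (σ x) P)
    (hrenewal : ∀ x y, ∫ ω in {ω | σ y ω ≤ t x ω}, (t x ω - σ y ω) ∂P
      ≤ (P {ω | σ y ω ≤ t x ω}).toReal * ∫ ω, t (x - y) ω ∂P)
    (htσ : ∀ y, ∀ᵐ ω ∂P, t y ω ≤ σ y ω)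
    (C₁ : ℝ) (hC₁ : ∀ y, ∫ ω, (σ y ω - t y ω) ∂P ≤ C₁)
    (x : Fin d → ℤ) (n : ℕ) :
    ∫ ω, t ((n + 1) • x) ω ∂P ≤ ∫ ω, t (n • x) ω ∂P
      + (P {ω | t (n • x) ω ≤ t ((n + 1) • x) ω}).toReal * ∫ ω, t x ω ∂P + C₁ := by
  set y := n • x with hy
  set z := (n + 1) • x with hzdef
  have hzy : z - y = x := by
    rw [hzdef, hy, succ_nsmul, add_sub_cancel_left]
  set A := {ω | σ y ω ≤ t z ω} with hAdef
  set B := {ω | t y ω ≤ t z ω} with hBdef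
  have hA : MeasurableSet A := measurableSet_le (hσ_meas y) (ht_meas z)
  have hf : Integrable (fun ω => t z ω - σ y ω) P := (ht_int z).sub (hσ_int y)
  have h2 : ∫ ω, (t z ω - σ y ω) ∂P ≤ ∫ ω in A, (t z ω - σ y ω) ∂P := by
    have hsplit := integral_add_compl hA hf
    have hc : ∫ ω in Aᶜ, (t z ω - σ y ω) ∂P ≤ 0 := by
      apply integral_nonpos_of_ae
      refine ae_restrict_of_forall_mem hA.compl ?_
      intro ω hω
      have : ¬ σ y ω ≤ t z ω := hω
      simp only [Pi.zero_apply]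
      linarith [lt_of_not_ge this]
    linarith
  have h3 : ∫ ω in A, (t z ω - σ y ω) ∂P ≤ (P A).toReal * ∫ ω, t x ω ∂P := by
    have := hrenewal z y
    rwa [hzy] at this
  have h4 : (P A).toReal ≤ (P B).toReal := by
    refine ENNReal.toReal_mono (measure_ne_top P B) (measure_mono_ae ?_)
    filter_upwards [htσ y] with ω h hω
    exact le_trans h hω
  have h5 : (P A).toReal * ∫ ω, t x ω ∂P ≤ (P B).toReal * ∫ ω, t x ω ∂P :=
    mul_le_mul_of_nonneg_right h4 (integral_nonneg (ht_nonneg x))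
  have h6 : ∫ ω, σ y ω ∂P ≤ ∫ ω, t y ω ∂P + C₁ := by
    have := hC₁ y
    rw [integral_sub (hσ_int y) (ht_int y)] at this
    linarith
  have h7 : ∫ ω, t z ω ∂P = (∫ ω, (t z ω - σ y ω) ∂P) + ∫ ω, σ y ω ∂P := by
    rw [integral_sub (ht_int z) (hσ_int y)]; ring
  linarith

/-- First statement of Theorem 1.1 (Uniformity of hitting times):
`lim_{|x|→∞} liminf_{n→∞} (1/n) ∑_{k=1}^n P(t((k-1)x) ≤ t(kx)) = 1`,
the limit in `x` being along the cofinite filter on `ℤ^d`. -/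
theorem stmt_10
    {Ω : Type*} [MeasurableSpace Ω] (P : Measure Ω) [IsProbabilityMeasure P]
    (d : ℕ) (hd : 1 ≤ d)
    (t σ : (Fin d → ℤ) → Ω → ℝ)
    (ht_meas : ∀ x, Measurable (t x)) (hσ_meas : ∀ x, Measurable (σ x))
    (ht_nonneg : ∀ x ω, 0 ≤ t x ω) (hσ_nonneg : ∀ x ω, 0 ≤ σ x ω)
    (ht_int : ∀ x, Integrable (t x) P) (hσ_int : ∀ x, Integrable (σ x) P)
    -- (i) the renewal bound of Lemma 3.1
    (hrenewal : ∀ x y, ∫ ω in {ω | σ y ω ≤ t x ω}, (t x ω - σ y ω) ∂P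
      ≤ (P {ω | σ y ω ≤ t x ω}).toReal * ∫ ω, t (x - y) ω ∂P)
    -- (ii) t ≤ σ a.s. and uniform bound on E[σ - t]
    (htσ : ∀ y, ∀ᵐ ω ∂P, t y ω ≤ σ y ω)
    (C₁ : ℝ) (hC₁ : ∀ y, ∫ ω, (σ y ω - t y ω) ∂P ≤ C₁)
    -- (iii) normalized expected hitting times converge
    (μ : (Fin d → ℤ) → ℝ) (hμ_nonneg : ∀ x, 0 ≤ μ x)
    (hμ : ∀ x, Tendsto (fun n : ℕ => (∫ ω, t (n • x) ω ∂P) / n) atTop (nhds (μ x)))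
    -- (iv) the shape theorem (Lemma 3.2)
    (hμ_inf : Tendsto μ cofinite atTop)
    (hshape : Tendsto (fun x => (∫ ω, t x ω ∂P) / μ x) cofinite (nhds 1)) :
    ∀ ε : ℝ, 0 < ε → ∃ R : ℕ, ∀ x : Fin d → ℤ, R ≤ onorm x →
      1 - ε < limsup (fun n : ℕ =>
        (P {ω | t (n • x) ω ≤ t ((n + 1) • x) ω}).toReal) atTop := by
  intro ε hε
  set ε₀ := min ε (1/2) with hε₀def
  have hε₀ : 0 < ε₀ := lt_min hε (by norm_num)
  have hε₀' : ε₀ ≤ 1/2 := min_le_right _ _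
  have hεε : 1 - ε ≤ 1 - ε₀ := by
    have := min_le_left ε (1/2); simp only [← hε₀def] at this; linarith
  have hC₁0 : 0 ≤ C₁ := by
    refine le_trans ?_ (hC₁ 0)
    refine integral_nonneg_of_ae ?_
    filter_upwards [htσ 0] with ω h
    simp only [Pi.zero_apply]
    linarith
  -- cofinite conditions
  have h1 : ∀ᶠ x in cofinite, max 1 (2 * C₁ / ε₀ + 1) ≤ μ x :=
    hμ_inf.eventually (eventually_ge_atTop _)
  have h2 : ∀ᶠ x in cofinite,
      (∫ ω, t x ω ∂P) / μ x ∈ Set.Ioo (1/2 : ℝ) (1 + ε₀/2) :=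
    hshape (Ioo_mem_nhds (by norm_num) (by linarith))
  have h := h1.and h2
  rw [eventually_cofinite] at h
  refine ⟨h.toFinset.sup onorm + 1, ?_⟩
  intro x hx
  have hxS : x ∉ h.toFinset := by
    intro hmem
    have := Finset.le_sup (f := onorm) hmem
    omega
  have hQ : max 1 (2 * C₁ / ε₀ + 1) ≤ μ x ∧
      (∫ ω, t x ω ∂P) / μ x ∈ Set.Ioo (1/2 : ℝ) (1 + ε₀/2) := by
    by_contra hq
    exact hxS (h.mem_toFinset.2 hq)
  obtain ⟨hμ1', hIoo⟩ := hQ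
  set E := ∫ ω, t x ω ∂P with hEdef
  have hμpos : 0 < μ x := lt_of_lt_of_le one_pos (le_trans (le_max_left _ _) hμ1')
  have hCε : 2 * C₁ < ε₀ * μ x := by
    have hle : 2 * C₁ / ε₀ < μ x := by
      have := le_trans (le_max_right 1 (2 * C₁ / ε₀ + 1)) hμ1'; linarith
    calc 2 * C₁ = 2 * C₁ / ε₀ * ε₀ := by field_simp
      _ < μ x * ε₀ := by exact mul_lt_mul_of_pos_right hle hε₀
      _ = ε₀ * μ x := by ring
  have hEl : μ x / 2 < E := by
    have := hIoo.1
    rw [lt_div_iff₀ hμpos] at this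
    linarith
  have hEu : E < (1 + ε₀/2) * μ x := by
    have := hIoo.2
    rw [div_lt_iff₀ hμpos] at this
    linarith
  have hE0 : 0 < E := by linarith
  -- apply the two lemmas
  set p : ℕ → ℝ := fun n : ℕ =>
    (P {ω | t (n • x) ω ≤ t ((n + 1) • x) ω}).toReal with hpdef
  have hp1 : ∀ n, p n ≤ 1 := by
    intro n
    exact (ENNReal.toReal_mono ENNReal.one_ne_top
      (prob_le_one (μ := P) (s := {ω | t (n • x) ω ≤ t ((n + 1) • x) ω}))).trans_eq ENNReal.toReal_one
  have hrec : ∀ n : ℕ, (fun n : ℕ => ∫ ω, t (n • x) ω ∂P) (n + 1)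
      ≤ (fun n : ℕ => ∫ ω, t (n • x) ω ∂P) n + p n * E + C₁ := by
    intro n
    exact stmt_10_lemA P t σ ht_meas hσ_meas ht_nonneg ht_int hσ_int
      hrenewal htσ C₁ hC₁ x n
  have hB := stmt_10_lemB (fun n : ℕ => ∫ ω, t (n • x) ω ∂P) p E C₁ (μ x)
    (le_of_lt hE0) hC₁0 (fun n => ENNReal.toReal_nonneg) hp1 hrec (hμ x)
  -- hB : μ x ≤ limsup p atTop * E + C₁
  set s := limsup p atTop with hsdef
  have hgoal : 1 - ε₀ < s := by
    by_contra hcon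
    push_neg at hcon
    have f1 : s * E ≤ (1 - ε₀) * E := mul_le_mul_of_nonneg_right hcon (le_of_lt hE0)
    have f2 : (1 - ε₀) * E ≤ (1 - ε₀) * ((1 + ε₀/2) * μ x) :=
      mul_le_mul_of_nonneg_left (le_of_lt hEu) (by linarith)
    nlinarith [mul_pos (mul_pos hε₀ hε₀) hμpos]
  linarith
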